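/- For every K ≥ 1 and every integer n ≥ 1 there exists a constant ρₙ = ρₙ(K) > 0 with the following property. Let I ⊆ ℝ be a compact interval with 0 ∈ I and let f : I → ℝ be a map with f(I) ⊆ I that has K-bounded nonlinearity. If |fⁿ(0)| ≤ ρₙ (where fⁿ is the n-fold iterate), then the critical orbit converges to an n-periodic sink: there exist an interval J ⊆ I with 0 ∈ J, fⁿ(J) ⊆ J and |(fⁿ)'(x)| ≤ 1/2 for all x ∈ J, and a point p ∈ J with fⁿ(p) = p such that f^{kn}(0) → p as k → ∞. -/

import Mathlib

open Set Filter

/-- `f : [a,b] → ℝ` (with `0 ∈ [a,b]`) has `K`-bounded nonlinearity if there is a `C¹`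
map `ψ` with `ψ(0) = 0`, `K⁻¹ ≤ ψ' ≤ K` on `[a,b]`, and `f(x) = f(0) + 2ψ(x)²`. -/
def KBoundedNonlinearity (K : ℝ) (f : ℝ → ℝ) (a b : ℝ) : Prop :=
  ∃ ψ ψ' : ℝ → ℝ, ψ 0 = 0 ∧
    (∀ x ∈ Icc a b,
      HasDerivWithinAt ψ (ψ' x) (Icc a b) x ∧ K⁻¹ ≤ ψ' x ∧ ψ' x ≤ K) ∧
    (∀ x ∈ Icc a b, f x = f 0 + 2 * ψ x ^ 2)

set_option maxHeartbeats 1600000 in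
/-- Lemma 7.2 (1d lower bound): for every `K ≥ 1` and `n ≥ 1` there is ρₙ = ρₙ(K) > 0
such that if `f : I → I` has `K`-bounded nonlinearity on a compact interval `I ∋ 0` and
`|fⁿ(0)| ≤ ρₙ`, then the critical orbit converges to an `n`-periodic sink: there is an
interval `J ⊆ I` with `0 ∈ J`, `fⁿ(J) ⊆ J` and `|(fⁿ)'| ≤ 1/2` on `J`, and a fixed point
`p ∈ J` of `fⁿ` with `f^{kn}(0) → p`. -/
theorem stmt6 (K : ℝ) (hK : 1 ≤ K) (n : ℕ) (hn : 1 ≤ n) :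
    ∃ ρ : ℝ, 0 < ρ ∧
      ∀ (a b : ℝ) (f : ℝ → ℝ), a ≤ 0 → 0 ≤ b → a < b →
        MapsTo f (Icc a b) (Icc a b) →
        KBoundedNonlinearity K f a b →
        |f^[n] 0| ≤ ρ →
        ∃ c d : ℝ, a ≤ c ∧ c ≤ 0 ∧ 0 ≤ d ∧ d ≤ b ∧
          MapsTo f^[n] (Icc c d) (Icc c d) ∧
          (∀ x ∈ Icc c d, ∀ dv : ℝ,
            HasDerivWithinAt f^[n] dv (Icc c d) x → |dv| ≤ 1 / 2) ∧
          ∃ p ∈ Icc c d, f^[n] p = p ∧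
            Tendsto (fun k => f^[k * n] 0) atTop (nhds p) := by
  have hK0 : (0:ℝ) < K := lt_of_lt_of_le one_pos hK
  have hKi0 : (0:ℝ) < K⁻¹ := inv_pos.2 hK0
  set M : ℝ := 4 * K ^ 4 with hM
  have hM0 : 0 < M := by positivity
  have hM1 : (1:ℝ) ≤ M := by
    have : (1:ℝ) ≤ K ^ 4 := one_le_pow₀ hK
    linarith
  set δ : ℝ := 1 / (8 * K ^ 2 * M ^ (n - 1)) with hδ
  have hMn0 : (0:ℝ) < M ^ (n-1) := by positivity
  have hδ0 : 0 < δ := by positivity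
  have hδhalf : 4 * K ^ 2 * δ * M ^ (n-1) = 1/2 := by
    rw [hδ]; field_simp; ring
  refine ⟨δ / 2, by positivity, ?_⟩
  rintro a b f ha hb hab hmaps ⟨ψ, ψ', hψ0, hψder, heq⟩ hρ
  have h0ab : (0:ℝ) ∈ Icc a b := ⟨ha, hb⟩
  have hf0 : f 0 ∈ Icc a b := hmaps h0ab
  -- derivative of f on [a,b]
  have hfd : ∀ x ∈ Icc a b, HasDerivWithinAt f (4 * ψ x * ψ' x) (Icc a b) x := by
    intro x hx
    have h1 : HasDerivWithinAt (fun y => f 0 + 2 * ψ y ^ 2)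
        (2 * ((2:ℕ) * ψ x ^ 1 * ψ' x)) (Icc a b) x :=
      (((hψder x hx).1.pow 2).const_mul 2).const_add (f 0)
    have h2 := h1.congr (fun y hy => heq y hy) (heq x hx)
    exact h2.congr_deriv (by push_cast; ring)
  -- |ψ x| ≤ K |x|
  have hψle : ∀ x ∈ Icc a b, |ψ x| ≤ K * |x| := by
    intro x hx
    have hb' : ∀ y ∈ Icc a b, ‖ψ' y‖ ≤ K := by
      intro y hy
      rcases hψder y hy with ⟨_, h1, h2⟩
      rw [Real.norm_eq_abs, abs_le]
      constructor <;> linarith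
    have := Convex.norm_image_sub_le_of_norm_hasDerivWithin_le
      (fun y hy => (hψder y hy).1) hb' (convex_Icc a b) h0ab hx
    simpa [hψ0, Real.norm_eq_abs] using this
  -- monotonicity of ψ x - K⁻¹ x
  have hmono : MonotoneOn (fun x => ψ x - K⁻¹ * x) (Icc a b) := by
    apply monotoneOn_of_hasDerivWithinAt_nonneg (f' := fun x => ψ' x - K⁻¹) (convex_Icc a b)
    · exact fun x hx => ((hψder x hx).1.continuousWithinAt).sub
        ((continuous_const.mul continuous_id).continuousWithinAt)
    · intro x hx
      have h1 : HasDerivWithinAt ψ (ψ' x) (interior (Icc a b)) x :=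
        ((hψder x (interior_subset hx)).1).mono interior_subset
      have h2 : HasDerivWithinAt (fun y : ℝ => K⁻¹ * y) (K⁻¹ * 1) (interior (Icc a b)) x :=
        (hasDerivWithinAt_id x _).const_mul K⁻¹
      have h3 := h1.sub h2
      rw [mul_one] at h3
      exact h3
    · intro x hx
      have := (hψder x (interior_subset hx)).2.1
      linarith
  -- interval is contained in [-K², K²]
  have hbK : b ≤ K ^ 2 ∧ -a ≤ K ^ 2 := by
    have hψb : K⁻¹ * b ≤ ψ b := by
      have := hmono h0ab (right_mem_Icc.2 hab.le) hb
      simp [hψ0] at this; linarith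
    have hψa : ψ a ≤ K⁻¹ * a := by
      have := hmono (left_mem_Icc.2 hab.le) h0ab ha
      simp [hψ0] at this; linarith
    have hfb := hmaps (right_mem_Icc.2 hab.le)
    have hfa := hmaps (left_mem_Icc.2 hab.le)
    have heqb := heq b (right_mem_Icc.2 hab.le)
    have heqa := heq a (left_mem_Icc.2 hab.le)
    have hb2 : 2 * (K⁻¹ * b) ^ 2 ≤ b - a := by
      have h1 : ψ b ^ 2 ≥ (K⁻¹ * b) ^ 2 := by nlinarith [mul_nonneg hKi0.le hb]
      have := hfb.2; have := hf0.1; nlinarith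
    have ha2 : 2 * (K⁻¹ * a) ^ 2 ≤ b - a := by
      have h1 : ψ a ^ 2 ≥ (K⁻¹ * a) ^ 2 := by
        have h2 : K⁻¹ * a ≤ 0 := mul_nonpos_of_nonneg_of_nonpos hKi0.le ha
        nlinarith
      have := hfa.2; have := hf0.1; nlinarith
    have hKK : K⁻¹ * K = 1 := inv_mul_cancel₀ hK0.ne'
    set m := max b (-a) with hm
    have hbm : b ≤ m := le_max_left _ _
    have ham : -a ≤ m := le_max_right _ _
    have hm0 : 0 < m := by
      rcases le_or_gt b 0 with h | h
      · have : 0 < -a := by linarith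
        exact lt_max_of_lt_right this
      · exact lt_max_of_lt_left h
    have h1 : K⁻¹ ^ 2 * m ^ 2 ≤ m := by
      rcases max_cases b (-a) with ⟨he, _⟩ | ⟨he, _⟩
      · rw [hm, he]
        have hex : 2 * (K⁻¹ * b) ^ 2 = 2 * (K⁻¹ ^ 2 * b ^ 2) := by ring
        rw [hex] at hb2
        linarith
      · rw [hm, he]
        have hex : 2 * (K⁻¹ * a) ^ 2 = 2 * (K⁻¹ ^ 2 * (-a) ^ 2) := by ring
        rw [hex] at ha2
        linarith
    have h2 : K⁻¹ ^ 2 * m ≤ 1 := by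
      have h1' : (K⁻¹ ^ 2 * m) * m ≤ 1 * m := by
        rw [one_mul]
        calc (K⁻¹ ^ 2 * m) * m = K⁻¹ ^ 2 * m ^ 2 := by ring
          _ ≤ m := h1
      exact le_of_mul_le_mul_right h1' hm0
    have h4 := mul_le_mul_of_nonneg_left h2 (by positivity : (0:ℝ) ≤ K ^ 2)
    have hKK2 : K ^ 2 * K⁻¹ ^ 2 = 1 := by
      rw [← mul_pow, mul_inv_cancel₀ hK0.ne', one_pow]
    have h5 : K ^ 2 * (K⁻¹ ^ 2 * m) = m := by
      rw [← mul_assoc, hKK2, one_mul]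
    have h3 : m ≤ K ^ 2 := by rw [h5] at h4; linarith
    exact ⟨le_trans hbm h3, le_trans ham h3⟩
  have habs : ∀ x ∈ Icc a b, |x| ≤ K ^ 2 := by
    intro x hx
    rw [abs_le]; exact ⟨by linarith [hx.1, hbK.2], by linarith [hx.2, hbK.1]⟩
  -- bound f' on [a,b] by M
  have hfd_bound : ∀ x ∈ Icc a b, |4 * ψ x * ψ' x| ≤ M := by
    intro x hx
    have h1 := hψle x hx
    have h2 := habs x hx
    have h3 := (hψder x hx).2.1
    have h4 := (hψder x hx).2.2
    have h5 : |ψ' x| ≤ K := by rw [abs_le]; constructor <;> linarith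
    calc |4 * ψ x * ψ' x| = 4 * |ψ x| * |ψ' x| := by
          rw [abs_mul, abs_mul]; norm_num
      _ ≤ 4 * (K * |x|) * K := by
          apply mul_le_mul _ h5 (abs_nonneg _) (by positivity)
          nlinarith [abs_nonneg (ψ x)]
      _ ≤ 4 * (K * K ^ 2) * K := by nlinarith
      _ = M := by rw [hM]; ring
  -- the small interval s = Icc c d
  set c : ℝ := max a (-δ) with hc
  set d : ℝ := min b δ with hd
  have hc0 : c ≤ 0 := max_le ha (by linarith)
  have hd0 : 0 ≤ d := le_min hb hδ0.le
  have h0s : (0:ℝ) ∈ Icc c d := ⟨hc0, hd0⟩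
  have hsub : Icc c d ⊆ Icc a b := Icc_subset_Icc (le_max_left _ _) (min_le_left _ _)
  have hcd : c < d := by
    rcases lt_or_eq_of_le ha with ha' | ha'
    · exact lt_of_lt_of_le (max_lt ha' (by linarith)) hd0
    · have hb' : 0 < b := ha' ▸ hab
      calc c ≤ 0 := hc0
        _ < d := lt_min hb' hδ0
  have hδs : ∀ x ∈ Icc c d, |x| ≤ δ := by
    intro x hx
    rw [abs_le]
    exact ⟨le_trans (le_max_right a (-δ)) hx.1, le_trans hx.2 (min_le_right b δ)⟩
  -- iterates stay in [a,b]
  have hit_mem : ∀ m : ℕ, ∀ x ∈ Icc a b, f^[m] x ∈ Icc a b := by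
    intro m
    induction m with
    | zero => intro x hx; simpa using hx
    | succ k ih =>
      intro x hx
      rw [Function.iterate_succ_apply']
      exact hmaps (ih x hx)
  -- derivative of iterates on s
  have hder_it : ∀ m : ℕ, ∀ x ∈ Icc c d,
      ∃ dv, HasDerivWithinAt f^[m+1] dv (Icc c d) x ∧ |dv| ≤ 4 * K ^ 2 * δ * M ^ m := by
    intro m
    induction m with
    | zero =>
      intro x hx
      refine ⟨4 * ψ x * ψ' x, ?_, ?_⟩
      · have := (hfd x (hsub hx)).mono hsub
        simpa [Function.iterate_one] using this
      · have h1 := hψle x (hsub hx)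
        have h3 := (hψder x (hsub hx)).2.1
        have h4 := (hψder x (hsub hx)).2.2
        have h5 : |ψ' x| ≤ K := by rw [abs_le]; constructor <;> linarith
        have h6 := hδs x hx
        calc |4 * ψ x * ψ' x| = 4 * |ψ x| * |ψ' x| := by rw [abs_mul, abs_mul]; norm_num
          _ ≤ 4 * (K * |x|) * K := by
              apply mul_le_mul _ h5 (abs_nonneg _) (by positivity)
              nlinarith [abs_nonneg (ψ x)]
          _ ≤ 4 * K ^ 2 * δ * M ^ 0 := by
              simp only [pow_zero, mul_one]
              nlinarith [abs_nonneg x]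
    | succ m ih =>
      intro x hx
      obtain ⟨dv, h1, h2⟩ := ih x hx
      set y := f^[m+1] x with hy
      have hyab : y ∈ Icc a b := hit_mem (m+1) x (hsub hx)
      have hout := hfd y hyab
      have hmapsit : MapsTo f^[m+1] (Icc c d) (Icc a b) := fun z hz => hit_mem (m+1) z (hsub hz)
      have hcomp := HasDerivWithinAt.comp x hout h1 hmapsit
      refine ⟨4 * ψ y * ψ' y * dv, ?_, ?_⟩
      · rw [show m+1+1 = (m+1)+1 from rfl, Function.iterate_succ']
        exact hcomp
      · have hb1 := hfd_bound y hyab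
        have hdv0 := abs_nonneg dv
        rw [abs_mul]
        calc |4 * ψ y * ψ' y| * |dv| ≤ M * (4 * K ^ 2 * δ * M ^ m) :=
              mul_le_mul hb1 h2 hdv0 hM0.le
          _ = 4 * K ^ 2 * δ * M ^ (m+1) := by ring
  -- derivative of f^[n] within s
  have hdiff : ∀ x ∈ Icc c d, HasDerivWithinAt f^[n] (derivWithin f^[n] (Icc c d) x) (Icc c d) x
      ∧ |derivWithin f^[n] (Icc c d) x| ≤ 1 / 2 := by
    intro x hx
    obtain ⟨dv, h1, h2⟩ := hder_it (n-1) x hx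
    have hn1 : n - 1 + 1 = n := Nat.succ_pred_eq_of_pos hn
    rw [hn1] at h1
    have hbd : |dv| ≤ 1/2 := by
      calc |dv| ≤ 4 * K ^ 2 * δ * M ^ (n-1) := h2
        _ = 1/2 := hδhalf
    have hu : UniqueDiffWithinAt ℝ (Icc c d) x := (uniqueDiffOn_Icc hcd) x hx
    have heqd := h1.derivWithin hu
    rw [heqd]
    exact ⟨h1, hbd⟩
  -- Lipschitz with constant 1/2 on s
  have hlip : ∀ x ∈ Icc c d, ∀ y ∈ Icc c d, |f^[n] y - f^[n] x| ≤ 1/2 * |y - x| := by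
    intro x hx y hy
    have := Convex.norm_image_sub_le_of_norm_hasDerivWithin_le
      (fun z hz => (hdiff z hz).1) (fun z hz => (hdiff z hz).2) (convex_Icc c d) hx hy
    simpa [Real.norm_eq_abs] using this
  -- f^[n] maps s into s
  have hmapsn : MapsTo f^[n] (Icc c d) (Icc c d) := by
    intro x hx
    have h1 : |f^[n] x - f^[n] 0| ≤ 1/2 * |x| := by simpa using hlip 0 h0s x hx
    have h3 := hδs x hx
    have h4 : |f^[n] x| ≤ |f^[n] x - f^[n] 0| + |f^[n] 0| := by
      have := abs_add_le (f^[n] x - f^[n] 0) (f^[n] 0)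
      simpa using this
    have h2 : |f^[n] x| ≤ δ := by linarith
    have h5 : f^[n] x ∈ Icc a b := hit_mem n x (hsub hx)
    rw [abs_le] at h2
    exact ⟨max_le h5.1 h2.1, le_min h5.2 h2.2⟩
  -- contraction
  have hlipOn : LipschitzOnWith (1/2 : NNReal) f^[n] (Icc c d) := by
    rw [lipschitzOnWith_iff_dist_le_mul]
    intro x hx y hy
    rw [Real.dist_eq, Real.dist_eq]
    have h := hlip y hy x hx
    have hcast : ((1/2 : NNReal) : ℝ) = 1/2 := by norm_num
    rw [hcast]
    exact h
  have hcontr : ContractingWith (1/2) (hmapsn.restrict f^[n] _ _) :=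
    ⟨by rw [← NNReal.coe_lt_coe]; norm_num, hlipOn.mapsToRestrict hmapsn⟩
  obtain ⟨p, hps, hfp, htend, -⟩ :=
    hcontr.exists_fixedPoint' isClosed_Icc.isComplete hmapsn h0s (edist_ne_top _ _)
  refine ⟨c, d, le_max_left _ _, hc0, hd0, min_le_left _ _, hmapsn, ?_, p, hps, hfp, ?_⟩
  · intro x hx dv hdv
    have hu : UniqueDiffWithinAt ℝ (Icc c d) x := (uniqueDiffOn_Icc hcd) x hx
    rw [← hdv.derivWithin hu]
    exact (hdiff x hx).2
  · refine htend.congr fun k => ?_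
    rw [mul_comm k n, Function.iterate_mul]
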